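/- Let n = p_1 ⋯ p_l be a Cunningham product, let I be a nonempty subset of {2, …, l} containing no two consecutive integers, let m = n / ∏_{i∈I} p_{i−1} p_i, and let N = C_m × ∏_{i∈I} (C_{p_{i−1}} ⋊ C_{p_i}), where each C_{p_{i−1}} ⋊ C_{p_i} is the nonabelian group of order p_{i−1} p_i. Then Hol(N) = Hol(C_m) × ∏_{i∈I} Hol(C_{p_{i−1}} ⋊ C_{p_i}). Suppose M_0, M_0' ≤ Hol(C_m) act transitively on C_m, and for each i ∈ I, M_i, M_i' ≤ Hol(C_{p_{i−1}} ⋊ C_{p_i}) act transitively on C_{p_{i−1}} ⋊ C_{p_i}, so that M := M_0 × ∏_{i∈I} M_i and M' := M_0' × ∏_{i∈I} M_i' are transitive subgroups of Hol(N). Then M and M' are isomorphic as permutation groups if and only if M_j and M_j' are isomorphic as permutation groups for each j ∈ {0} ∪ I. -/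

import Mathlib

/-- The holomorph `Hol(N) = N ⋊ Aut(N)` of a group `N`, with multiplication
`[η, α][μ, β] = [η α(μ), α β]`. -/
abbrev Hol (N : Type*) [Group N] : Type _ :=
  N ⋊[MonoidHom.id (MulAut N)] MulAut N

/-- The natural action of the holomorph on `N`: `[η, α] · x = η α(x)`. -/
def holSmul {N : Type*} [Group N] (g : Hol N) (x : N) : N :=
  g.left * g.right x

/-- The componentwise action of `Hol(A) × ∏ᵢ Hol(Bᵢ)` on `A × ∏ᵢ Bᵢ`. -/
def prodHolSmul {A : Type*} [Group A] {η : Type*} {B : η → Type*} [∀ i, Group (B i)]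
    (g : Hol A × ((i : η) → Hol (B i))) (x : A × ((i : η) → B i)) :
    A × ((i : η) → B i) :=
  (holSmul g.1 x.1, fun i => holSmul (g.2 i) (x.2 i))

lemma holSmul_mul {N : Type*} [Group N] (g h : Hol N) (x : N) :
    holSmul (g * h) x = holSmul g (holSmul h x) := by
  simp [holSmul, mul_assoc]

lemma holSmul_one {N : Type*} [Group N] (x : N) : holSmul (1 : Hol N) x = x := by
  simp [holSmul]

lemma holSmul_faithful {N : Type*} [Group N] (g : Hol N) (h : ∀ x, holSmul g x = x) :
    g = 1 := by
  have h1 : g.left = 1 := by simpa [holSmul] using h 1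
  have h2 : g.right = 1 := by
    ext x
    have := h x
    rw [holSmul, h1, one_mul] at this
    simpa using this
  cases g
  simp only at h1 h2
  rw [h1, h2]
  rfl

-- orbit counting
lemma orbit_card_eq {H K Y : Type*} [Group H] [Group K] [MulAction H Y] [MulAction K Y]
    (hcomm : ∀ (h : H) (k : K) (y : Y), h • (k • y) = k • (h • y))
    (k : K) (y : Y) :
    Nat.card (MulAction.orbit H y) = Nat.card (MulAction.orbit H (k • y)) := by
  refine Nat.card_eq_of_bijective (fun w => ⟨k • (w : Y), ?_⟩) ⟨?_, ?_⟩
  · obtain ⟨w, hw⟩ := w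
    obtain ⟨h, rfl⟩ := hw
    exact ⟨h, by simp only; rw [hcomm]⟩
  · rintro ⟨w, hw⟩ ⟨w', hw'⟩ hww
    simp only [Subtype.mk.injEq] at hww ⊢
    exact smul_left_cancel k hww
  · rintro ⟨w, h, rfl⟩
    refine ⟨⟨k⁻¹ • (h • (k • y)), ⟨h, by simp only; rw [hcomm]; simp⟩⟩, ?_⟩
    simp

lemma natcard_sigma (ι : Type*) [Fintype ι] (f : ι → Type*) [∀ i, Finite (f i)] :
    Nat.card ((i : ι) × f i) = ∑ i, Nat.card (f i) := by
  classical
  have : ∀ i, Fintype (f i) := fun i => Fintype.ofFinite _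
  simp only [Nat.card_eq_fintype_card]
  exact Fintype.card_sigma

lemma orbits_trivial {H K Y : Type*} [Group H] [Group K] [MulAction H Y] [MulAction K Y]
    [Finite Y] [Nonempty Y]
    (hcomm : ∀ (h : H) (k : K) (y : Y), h • (k • y) = k • (h • y))
    (hKtrans : ∀ a b : Y, ∃ k : K, k • a = b)
    (r : ℕ) (hr : ∀ y : Y, Nat.card (MulAction.orbit H y) ∣ r)
    (hcop : Nat.Coprime r (Nat.card Y)) (h : H) (y : Y) : h • y = y := by
  classical
  obtain ⟨y₀⟩ := ‹Nonempty Y›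
  set s := Nat.card (MulAction.orbit H y₀) with hs
  have hsame : ∀ z : Y, Nat.card (MulAction.orbit H z) = s := by
    intro z
    obtain ⟨k, hk⟩ := hKtrans y₀ z
    rw [← hk]
    exact (orbit_card_eq hcomm k y₀).symm
  have hft : Fintype (MulAction.orbitRel.Quotient H Y) := Fintype.ofFinite _
  have hYcard : Nat.card Y = ∑ ω : MulAction.orbitRel.Quotient H Y,
      Nat.card (MulAction.orbit H (Quotient.out ω)) := by
    have e := MulAction.selfEquivSigmaOrbits H Y
    rw [Nat.card_congr e]
    exact natcard_sigma _ _
  have hsdvd : s ∣ Nat.card Y := by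
    rw [hYcard]
    exact Finset.dvd_sum (fun ω _ => by rw [hsame])
  have hs1 : s = 1 := Nat.eq_one_of_dvd_coprimes hcop (hr y₀) hsdvd
  -- orbit of y is a singleton
  have h1 : Nat.card (MulAction.orbit H y) = 1 := by rw [hsame]; exact hs1
  have : Subsingleton (MulAction.orbit H y) := (Nat.card_eq_one_iff_unique.mp h1).1
  have h2 : (⟨h • y, MulAction.mem_orbit y h⟩ : MulAction.orbit H y)
      = ⟨y, MulAction.mem_orbit_self y⟩ := Subsingleton.elim _ _
  simpa using congrArg Subtype.val h2

lemma card_dvd_of_classes {Z : Type*} [Finite Z] (r : Z → Z → Prop) (hr : Equivalence r)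
    (c : ℕ) (hc : ∀ z, Nat.card {w // r z w} = c) : c ∣ Nat.card Z := by
  classical
  letI s : Setoid Z := ⟨r, hr⟩
  have hft : Fintype (Quotient s) := Fintype.ofFinite _
  have e1 : Z ≃ (q : Quotient s) × {w // Quotient.mk s w = q} :=
    (Equiv.sigmaFiberEquiv (Quotient.mk s)).symm
  have : Nat.card Z = ∑ q : Quotient s, Nat.card {w // Quotient.mk s w = q} := by
    rw [Nat.card_congr e1]; exact natcard_sigma _ _
  rw [this]
  refine Finset.dvd_sum (fun q _ => ?_)
  obtain ⟨z, rfl⟩ := Quotient.exists_rep q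
  have e2 : {w // Quotient.mk s w = Quotient.mk s z} ≃ {w // r z w} := by
    refine Equiv.subtypeEquivRight (fun w => ?_)
    rw [Quotient.eq]
    exact ⟨fun h => hr.symm h, fun h => hr.symm h⟩
  rw [Nat.card_congr e2, hc]

section Block
variable {Y₁ Y₂ H₁ H₂ : Type*} [Group H₁] [Group H₂]
    [MulAction H₁ Y₁] [MulAction H₂ Y₂] [Finite Y₁] [Finite Y₂]

lemma block_relation_eq [Nonempty Y₂]
    (htr₁ : ∀ a b : Y₁, ∃ h : H₁, h • a = b)
    (htr₂ : ∀ a b : Y₂, ∃ h : H₂, h • a = b)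
    (hcop : Nat.Coprime (Nat.card Y₁) (Nat.card Y₂))
    (e : Y₁ × Y₂ → Y₁ × Y₂ → Prop) (heq : Equivalence e)
    (hinv : ∀ (h₁ : H₁) (h₂ : H₂) (x y : Y₁ × Y₂), e x y →
      e (h₁ • x.1, h₂ • x.2) (h₁ • y.1, h₂ • y.2))
    (hsize : ∀ x, Nat.card {y // e x y} = Nat.card Y₁) :
    ∀ x y, e x y ↔ x.2 = y.2 := by
  classical
  rcases isEmpty_or_nonempty Y₁ with hY | hY
  · exact fun x y => (hY.false x.1).elim
  set cfun : Y₁ × Y₂ → ℕ := fun x => Nat.card {y // e x y ∧ y.1 = x.1} with hcfun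
  -- constancy of cfun
  have hconst : ∀ x x' : Y₁ × Y₂, cfun x = cfun x' := by
    intro x x'
    obtain ⟨h₁, hh₁⟩ := htr₁ x.1 x'.1
    obtain ⟨h₂, hh₂⟩ := htr₂ x.2 x'.2
    have hact : ((h₁ • x.1, h₂ • x.2) : Y₁ × Y₂) = x' := by rw [hh₁, hh₂]
    refine Nat.card_congr ?_
    refine ⟨fun y => ⟨(h₁ • y.val.1, h₂ • y.val.2), ?_, ?_⟩,
           fun z => ⟨(h₁⁻¹ • z.val.1, h₂⁻¹ • z.val.2), ?_, ?_⟩, ?_, ?_⟩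
    · rw [← hact]; exact hinv h₁ h₂ x y.val y.prop.1
    · simp only [← hh₁, y.prop.2]
    · have := hinv h₁⁻¹ h₂⁻¹ x' z.val z.prop.1
      have hx : ((h₁⁻¹ • x'.1, h₂⁻¹ • x'.2) : Y₁ × Y₂) = x := by
        rw [← hact]; simp
      rwa [hx] at this
    · simp only [z.prop.2, ← hact]; simp
    · intro y; ext <;> simp
    · intro z; ext <;> simp
  -- cfun divides card Y₂
  have hdvd₂ : ∀ x, cfun x ∣ Nat.card Y₂ := by
    intro x
    refine card_dvd_of_classes (fun y₂ y₂' => e (x.1, y₂) (x.1, y₂'))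
      ⟨fun y₂ => heq.refl _, fun h => heq.symm h, fun h h' => heq.trans h h'⟩ (cfun x)
      (fun z => ?_)
    have e2 : {w // e (x.1, z) (x.1, w)} ≃ {y // e (x.1, z) y ∧ y.1 = (x.1, z).1} := by
      refine ⟨fun w => ⟨(x.1, w.val), w.prop, rfl⟩,
        fun y => ⟨y.val.2, ?_⟩, fun w => rfl, fun y => ?_⟩
      · have h1 : y.val = (x.1, y.val.2) := by
          have h2 := y.prop.2
          exact Prod.ext h2 rfl
        rw [← h1]; exact y.prop.1
      · ext
        · exact y.prop.2.symm
        · rfl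
    rw [Nat.card_congr e2]
    exact hconst (x.1, z) x
  -- cfun divides card Y₁
  have hdvd₁ : ∀ x, cfun x ∣ Nat.card Y₁ := by
    intro x
    rw [← hsize x]
    refine card_dvd_of_classes (fun u v : {y // e x y} => u.val.1 = v.val.1)
      ⟨fun u => rfl, fun h => h.symm, fun h h' => h.trans h'⟩ (cfun x) (fun u => ?_)
    have e2 : {v : {y // e x y} // u.val.1 = v.val.1} ≃ {y // e u.val y ∧ y.1 = u.val.1} := by
      refine ⟨fun v => ⟨v.val.val, heq.trans (heq.symm u.prop) v.val.prop, v.prop.symm⟩,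
        fun y => ⟨⟨y.val, heq.trans u.prop y.prop.1⟩, y.prop.2.symm⟩,
        fun v => rfl, fun y => rfl⟩
    rw [Nat.card_congr e2]
    exact hconst u.val x
  have hc1 : ∀ x, cfun x = 1 := fun x =>
    Nat.eq_one_of_dvd_coprimes hcop (hdvd₁ x) (hdvd₂ x)
  -- uniqueness (U)
  have hU : ∀ x y : Y₁ × Y₂, e x y → x.1 = y.1 → x = y := by
    intro x y hxy h1
    have hsub : Subsingleton {z // e x z ∧ z.1 = x.1} :=
      (Nat.card_eq_one_iff_unique.mp (hc1 x)).1
    have := @Subsingleton.elim _ hsub ⟨x, heq.refl x, rfl⟩ ⟨y, hxy, h1.symm⟩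
    exact congrArg Subtype.val this
  -- existence: every class meets every column exactly once
  have hex : ∀ (x : Y₁ × Y₂) (y₁ : Y₁), ∃ w : Y₂, e x (y₁, w) := by
    intro x y₁
    have hinj : Function.Injective (fun y : {y // e x y} => y.val.1) := by
      rintro ⟨u, hu⟩ ⟨v, hv⟩ huv
      simp only at huv
      have : u = v := hU u v (heq.trans (heq.symm hu) hv) huv
      exact Subtype.ext this
    have hbij : Function.Bijective (fun y : {y // e x y} => y.val.1) :=
      (Nat.bijective_iff_injective_and_card _).mpr ⟨hinj, hsize x⟩
    obtain ⟨⟨w, hw⟩, hw1⟩ := hbij.2 y₁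
    simp only at hw1
    refine ⟨w.2, ?_⟩
    have : w = (y₁, w.2) := Prod.ext hw1 rfl
    rwa [this] at hw
  obtain ⟨b₁⟩ := hY
  -- the induced H₁-"action" on Y₂
  have haex : ∀ (h : H₁) (y₂ : Y₂), ∃ w : Y₂, e (h • b₁, y₂) (b₁, w) := fun h y₂ =>
    hex (h • b₁, y₂) b₁
  set a : H₁ → Y₂ → Y₂ := fun h y₂ => (haex h y₂).choose with ha
  have haspec : ∀ (h : H₁) (y₂ : Y₂), e (h • b₁, y₂) (b₁, a h y₂) := fun h y₂ =>
    (haex h y₂).choose_spec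
  have hauniq : ∀ (h : H₁) (y₂ w : Y₂), e (h • b₁, y₂) (b₁, w) → a h y₂ = w := by
    intro h y₂ w hw
    have := hU (b₁, a h y₂) (b₁, w) (heq.trans (heq.symm (haspec h y₂)) hw) rfl
    exact congrArg Prod.snd this
  have hP1 : ∀ y₂, a 1 y₂ = y₂ := by
    intro y₂
    apply hauniq
    rw [one_smul]
    exact heq.refl _
  have hP2 : ∀ (g h : H₁) (y₂ : Y₂), a (g * h) y₂ = a g (a h y₂) := by
    intro g h y₂
    apply hauniq
    have t1 := hinv g (1 : H₂) _ _ (haspec h y₂)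
    simp only [one_smul, smul_smul] at t1
    have t2 := haspec g (a h y₂)
    exact heq.trans t1 t2
  have hP3 : ∀ (h : H₁) (k : H₂) (y₂ : Y₂), a h (k • y₂) = k • a h y₂ := by
    intro h k y₂
    apply hauniq
    have := hinv (1 : H₁) k _ _ (haspec h y₂)
    simpa using this
  have hP4 : ∀ (h : H₁), h • b₁ = b₁ → ∀ y₂, a h y₂ = y₂ := by
    intro h hh y₂
    apply hauniq
    rw [hh]
    exact heq.refl _
  -- make it a genuine action and count orbits
  letI act : MulAction H₁ Y₂ :=
    { smul := a
      one_smul := hP1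
      mul_smul := hP2 }
  have hsmul_def : ∀ (h : H₁) (y₂ : Y₂), h • y₂ = a h y₂ := fun _ _ => rfl
  have hdvd : ∀ y₂ : Y₂, Nat.card (MulAction.orbit H₁ y₂) ∣ Nat.card Y₁ := by
    intro y₂
    have hle : MulAction.stabilizer H₁ b₁ ≤ MulAction.stabilizer H₁ y₂ := by
      intro h hh
      have : h • b₁ = b₁ := hh
      exact hP4 h this y₂
    have h1 := Subgroup.index_dvd_of_le hle
    rw [MulAction.index_stabilizer, MulAction.index_stabilizer] at h1
    have horb : MulAction.orbit H₁ b₁ = Set.univ := by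
      ext z
      simp only [Set.mem_univ, iff_true, MulAction.mem_orbit_iff]
      exact htr₁ b₁ z
    rw [horb, Set.ncard_univ] at h1
    rw [Nat.card_coe_set_eq]
    exact h1
  have htriv : ∀ (h : H₁) (y₂ : Y₂), a h y₂ = y₂ := by
    intro h y₂
    exact orbits_trivial (fun h k y => hP3 h k y) htr₂ (Nat.card Y₁) hdvd hcop h y₂
  have hall : ∀ (y₁ : Y₁) (y₂ : Y₂), e (y₁, y₂) (b₁, y₂) := by
    intro y₁ y₂
    obtain ⟨h, hh⟩ := htr₁ b₁ y₁
    have := haspec h y₂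
    rw [hh, htriv h y₂] at this
    exact this
  intro x y
  constructor
  · intro hxy
    have h1 : e y (x.1, y.2) := by
      have t1 : e (y.1, y.2) (b₁, y.2) := hall y.1 y.2
      have t2 : e (x.1, y.2) (b₁, y.2) := hall x.1 y.2
      have t3 : e y (b₁, y.2) := by rwa [Prod.mk.eta] at t1
      exact heq.trans t3 (heq.symm t2)
    have h2 : e x (x.1, y.2) := heq.trans hxy h1
    have h3 := hU x (x.1, y.2) h2 rfl
    have h4 := congrArg Prod.snd h3
    exact h4
  · intro h2
    have t1 : e x (b₁, x.2) := by
      have := hall x.1 x.2; rwa [Prod.mk.eta] at this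
    have t2 : e y (b₁, y.2) := by
      have := hall y.1 y.2; rwa [Prod.mk.eta] at this
    rw [h2] at t1
    exact heq.trans t1 (heq.symm t2)

end Block

lemma eq_one_of_orderOf_dvd_coprime {G : Type*} [Group G] (x : G) {a b : ℕ}
    (h1 : orderOf x ∣ a) (h2 : orderOf x ∣ b) (hc : Nat.Coprime a b) : x = 1 := by
  have hd : orderOf x ∣ Nat.gcd a b := Nat.dvd_gcd h1 h2
  rw [Nat.Coprime.gcd_eq_one hc] at hd
  have := Nat.dvd_one.mp hd
  exact orderOf_eq_one_iff.mp this

section PiHol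

variable {ι : Type*} [Fintype ι] [DecidableEq ι] {G : ι → Type*} [∀ i, Group (G i)]
  [∀ i, Finite (G i)]

/-- key computation: automorphisms of a product of pairwise-coprime-order groups
act componentwise. -/
lemma piAut_componentwise
    (hcop : ∀ i j, i ≠ j → Nat.Coprime (Nat.card (G i)) (Nat.card (G j)))
    (α : MulAut ((i : ι) → G i)) (x : (i : ι) → G i) (k : ι) :
    (α x) k = (α (Pi.mulSingle k (x k))) k := by
  classical
  have hxsplit : x = Pi.mulSingle k (x k) * Function.update x k 1 := by
    funext j
    by_cases hj : j = k
    · subst hj; simp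
    · simp [Pi.mulSingle_eq_of_ne hj, Function.update_of_ne hj]
  set z := Function.update x k 1 with hz
  have hzk : (α z) k = 1 := by
    set E := ∏ j ∈ Finset.univ.erase k, Nat.card (G j) with hE
    have hzE : orderOf z ∣ E := by
      rw [orderOf_dvd_iff_pow_eq_one]
      funext j
      rw [Pi.pow_apply, Pi.one_apply]
      by_cases hj : j = k
      · subst hj
        rw [hz, Function.update_self, one_pow]
      · have h1 : orderOf (z j) ∣ Nat.card (G j) := orderOf_dvd_natCard _
        have h2 : Nat.card (G j) ∣ E := Finset.dvd_prod_of_mem _ (by simp [hj])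
        exact orderOf_dvd_iff_pow_eq_one.mp (h1.trans h2)
    have hαz : orderOf (α z) ∣ E := by
      have := orderOf_map_dvd α.toMonoidHom z
      exact this.trans hzE
    have h3 : orderOf ((α z) k) ∣ E := (orderOf_map_dvd (Pi.evalMonoidHom G k) (α z)).trans hαz
    have h4 : orderOf ((α z) k) ∣ Nat.card (G k) := orderOf_dvd_natCard _
    refine eq_one_of_orderOf_dvd_coprime _ h4 h3 ?_
    refine Nat.Coprime.prod_right (fun j hj => ?_)
    exact hcop k j (by rintro rfl; simp at hj)
  calc (α x) k = (α (Pi.mulSingle k (x k)) * α z) k := by rw [← map_mul, ← hxsplit]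
    _ = (α (Pi.mulSingle k (x k))) k * (α z) k := rfl
    _ = (α (Pi.mulSingle k (x k))) k := by rw [hzk, mul_one]

lemma piAut_single
    (hcop : ∀ i j, i ≠ j → Nat.Coprime (Nat.card (G i)) (Nat.card (G j)))
    (α : MulAut ((i : ι) → G i)) (k : ι) (a : G k) :
    α (Pi.mulSingle k a) = Pi.mulSingle k ((α (Pi.mulSingle k a)) k) := by
  classical
  funext j
  by_cases hj : j = k
  · subst hj; simp
  · rw [Pi.mulSingle_eq_of_ne hj]
    have h1 := piAut_componentwise hcop α (Pi.mulSingle k a) j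
    rw [Pi.mulSingle_eq_of_ne hj] at h1
    rw [h1]
    have : (Pi.mulSingle j (1 : G j) : (i : ι) → G i) = 1 := by
      funext t; by_cases ht : t = j
      · subst ht; simp
      · simp [Pi.mulSingle_eq_of_ne ht]
    rw [this, map_one, Pi.one_apply]

/-- the factor automorphism of a componentwise automorphism. -/
def autFactorPi
    (hcop : ∀ i j, i ≠ j → Nat.Coprime (Nat.card (G i)) (Nat.card (G j)))
    (α : MulAut ((i : ι) → G i)) (k : ι) : MulAut (G k) where
  toFun a := (α (Pi.mulSingle k a)) k
  invFun a := (α.symm (Pi.mulSingle k a)) k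
  left_inv a := by
    show (α.symm (Pi.mulSingle k ((α (Pi.mulSingle k a)) k))) k = a
    rw [← piAut_single hcop α k a, MulEquiv.symm_apply_apply, Pi.mulSingle_eq_same]
  right_inv a := by
    show (α (Pi.mulSingle k ((α.symm (Pi.mulSingle k a)) k))) k = a
    rw [← piAut_single hcop α.symm k a, MulEquiv.apply_symm_apply, Pi.mulSingle_eq_same]
  map_mul' a b := by
    show α (Pi.mulSingle k (a * b)) k = α (Pi.mulSingle k a) k * α (Pi.mulSingle k b) k
    rw [Pi.mulSingle_mul, map_mul, Pi.mul_apply]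

lemma autFactorPi_spec
    (hcop : ∀ i j, i ≠ j → Nat.Coprime (Nat.card (G i)) (Nat.card (G j)))
    (α : MulAut ((i : ι) → G i)) (x : (i : ι) → G i) :
    α x = fun k => autFactorPi hcop α k (x k) := by
  funext k
  exact piAut_componentwise hcop α x k

/-- `Hol` of a finite product of groups of pairwise coprime orders. -/
def holPiEquiv
    (hcop : ∀ i j, i ≠ j → Nat.Coprime (Nat.card (G i)) (Nat.card (G j))) :
    Hol ((i : ι) → G i) ≃* ((i : ι) → Hol (G i)) where
  toFun g := fun i => ⟨g.left i, autFactorPi hcop g.right i⟩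
  invFun g := ⟨fun i => (g i).left, MulEquiv.piCongrRight (fun i => (g i).right)⟩
  left_inv g := by
    refine SemidirectProduct.ext rfl ?_
    ext x k
    simp only [MulEquiv.piCongrRight]
    exact (piAut_componentwise hcop g.right x k).symm
  right_inv g := by
    funext i
    refine SemidirectProduct.ext rfl ?_
    ext a
    show (MulEquiv.piCongrRight (fun i => (g i).right)) (Pi.mulSingle i a) i = (g i).right a
    simp only [MulEquiv.piCongrRight, MulEquiv.coe_mk, Equiv.coe_fn_mk, Pi.map_apply]
    exact congrArg (g i).right (Pi.mulSingle_eq_same i a)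
  map_mul' g h := by
    funext i
    refine SemidirectProduct.ext ?_ ?_
    · show (g.left * g.right h.left) i = g.left i * autFactorPi hcop g.right i (h.left i)
      rw [Pi.mul_apply]
      congr 1
      exact piAut_componentwise hcop g.right h.left i
    · show autFactorPi hcop (g.right * h.right) i
          = autFactorPi hcop g.right i * autFactorPi hcop h.right i
      ext a
      show (g.right (h.right (Pi.mulSingle i a))) i
        = autFactorPi hcop g.right i (autFactorPi hcop h.right i a)
      rw [piAut_single hcop h.right i a]
      rfl

end PiHol

section ProdHol
variable {A B : Type*} [Group A] [Group B] [Finite A] [Finite B]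

lemma prodAut_inl (hcop : Nat.Coprime (Nat.card A) (Nat.card B))
    (α : MulAut (A × B)) (a : A) : α (a, 1) = ((α (a, 1)).1, 1) := by
  have h1 : orderOf ((a, 1) : A × B) ∣ Nat.card A := by
    rw [orderOf_dvd_iff_pow_eq_one, Prod.pow_mk, one_pow, Prod.mk_eq_one]
    exact ⟨orderOf_dvd_iff_pow_eq_one.mp (orderOf_dvd_natCard a), rfl⟩
  have h2 : orderOf (α (a, 1)) ∣ Nat.card A :=
    (orderOf_map_dvd α.toMonoidHom _).trans h1
  have h3 : orderOf ((α (a, 1)).2) ∣ Nat.card A :=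
    (orderOf_map_dvd (MonoidHom.snd A B) _).trans h2
  have h4 : (α (a, 1)).2 = 1 :=
    eq_one_of_orderOf_dvd_coprime _ h3 (orderOf_dvd_natCard _) hcop
  exact Prod.ext rfl h4

lemma prodAut_inr (hcop : Nat.Coprime (Nat.card A) (Nat.card B))
    (α : MulAut (A × B)) (b : B) : α (1, b) = (1, (α (1, b)).2) := by
  have h1 : orderOf ((1, b) : A × B) ∣ Nat.card B := by
    rw [orderOf_dvd_iff_pow_eq_one, Prod.pow_mk, one_pow, Prod.mk_eq_one]
    exact ⟨rfl, orderOf_dvd_iff_pow_eq_one.mp (orderOf_dvd_natCard b)⟩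
  have h2 : orderOf (α (1, b)) ∣ Nat.card B :=
    (orderOf_map_dvd α.toMonoidHom _).trans h1
  have h3 : orderOf ((α (1, b)).1) ∣ Nat.card B :=
    (orderOf_map_dvd (MonoidHom.fst A B) _).trans h2
  have h4 : (α (1, b)).1 = 1 :=
    eq_one_of_orderOf_dvd_coprime _ h3 (orderOf_dvd_natCard _) hcop.symm
  exact Prod.ext h4 rfl

lemma prodAut_componentwise (hcop : Nat.Coprime (Nat.card A) (Nat.card B))
    (α : MulAut (A × B)) (x : A × B) :
    α x = ((α (x.1, 1)).1, (α (1, x.2)).2) := by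
  have hx : x = (x.1, 1) * (1, x.2) := by simp
  calc α x = α (x.1, 1) * α (1, x.2) := by rw [← map_mul, ← hx]
    _ = ((α (x.1, 1)).1, 1) * (1, (α (1, x.2)).2) := by
        rw [← prodAut_inl hcop, ← prodAut_inr hcop]
    _ = ((α (x.1, 1)).1, (α (1, x.2)).2) := by simp

def autFactorFst (hcop : Nat.Coprime (Nat.card A) (Nat.card B))
    (α : MulAut (A × B)) : MulAut A where
  toFun a := (α (a, 1)).1
  invFun a := (α.symm (a, 1)).1
  left_inv a := by
    show (α.symm ((α (a, 1)).1, 1)).1 = a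
    rw [← prodAut_inl hcop α a, MulEquiv.symm_apply_apply]
  right_inv a := by
    show (α ((α.symm (a, 1)).1, 1)).1 = a
    rw [← prodAut_inl hcop α.symm a, MulEquiv.apply_symm_apply]
  map_mul' a b := by
    show (α ((a * b), 1)).1 = (α (a, 1)).1 * (α (b, 1)).1
    have : ((a * b, 1) : A × B) = (a, 1) * (b, 1) := by simp
    rw [this, map_mul, Prod.fst_mul]

def autFactorSnd (hcop : Nat.Coprime (Nat.card A) (Nat.card B))
    (α : MulAut (A × B)) : MulAut B where
  toFun b := (α (1, b)).2
  invFun b := (α.symm (1, b)).2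
  left_inv b := by
    show (α.symm (1, (α (1, b)).2)).2 = b
    rw [← prodAut_inr hcop α b, MulEquiv.symm_apply_apply]
  right_inv b := by
    show (α (1, (α.symm (1, b)).2)).2 = b
    rw [← prodAut_inr hcop α.symm b, MulEquiv.apply_symm_apply]
  map_mul' a b := by
    show (α (1, a * b)).2 = (α (1, a)).2 * (α (1, b)).2
    have : ((1, a * b) : A × B) = (1, a) * (1, b) := by simp
    rw [this, map_mul, Prod.snd_mul]

def holProdEquiv (hcop : Nat.Coprime (Nat.card A) (Nat.card B)) :
    Hol (A × B) ≃* Hol A × Hol B where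
  toFun g := (⟨g.left.1, autFactorFst hcop g.right⟩, ⟨g.left.2, autFactorSnd hcop g.right⟩)
  invFun g := ⟨(g.1.left, g.2.left), MulEquiv.prodCongr g.1.right g.2.right⟩
  left_inv g := by
    refine SemidirectProduct.ext rfl ?_
    refine MulEquiv.ext fun x => ?_
    show ((g.right (x.1, 1)).1, (g.right (1, x.2)).2) = g.right x
    exact (prodAut_componentwise hcop g.right x).symm
  right_inv g := by
    refine Prod.ext (SemidirectProduct.ext rfl ?_) (SemidirectProduct.ext rfl ?_)
    · ext a
      show ((MulEquiv.prodCongr g.1.right g.2.right) (a, 1)).1 = g.1.right a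
      simp [MulEquiv.prodCongr]
    · ext b
      show ((MulEquiv.prodCongr g.1.right g.2.right) (1, b)).2 = g.2.right b
      simp [MulEquiv.prodCongr]
  map_mul' g h := by
    refine Prod.ext (SemidirectProduct.ext ?_ ?_) (SemidirectProduct.ext ?_ ?_)
    · show (g.left * g.right h.left).1 = g.left.1 * autFactorFst hcop g.right h.left.1
      rw [Prod.fst_mul, prodAut_componentwise hcop g.right h.left]
      rfl
    · ext a
      show (g.right (h.right (a, 1))).1
        = autFactorFst hcop g.right (autFactorFst hcop h.right a)
      rw [prodAut_inl hcop h.right a]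
      rfl
    · show (g.left * g.right h.left).2 = g.left.2 * autFactorSnd hcop g.right h.left.2
      rw [Prod.snd_mul, prodAut_componentwise hcop g.right h.left]
      rfl
    · ext b
      show (g.right (h.right (1, b))).2
        = autFactorSnd hcop g.right (autFactorSnd hcop h.right b)
      rw [prodAut_inr hcop h.right b]
      rfl

end ProdHol

section NumberTheory

lemma cunningham_facts (l : ℕ) (p : ℕ → ℕ)
    (hprime : ∀ i, 1 ≤ i → i ≤ l → (p i).Prime)
    (hchain : ∀ i, 1 ≤ i → i < l → p i = 2 * p (i + 1) + 1)
    (I : Finset ℕ) (hIsub : I ⊆ Finset.Icc 2 l)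
    (hIcons : ∀ i ∈ I, i + 1 ∉ I)
    (m : ℕ) (hm : (∏ i ∈ Finset.Icc 1 l, p i) = m * ∏ i ∈ I, (p (i - 1) * p i)) :
    0 < m ∧ (∀ i ∈ I, Nat.Coprime m (p (i - 1) * p i)) ∧
      (∀ i ∈ I, ∀ j ∈ I, i ≠ j → Nat.Coprime (p (i - 1) * p i) (p (j - 1) * p j)) := by
  classical
  -- basic index facts
  have hIm : ∀ i ∈ I, 2 ≤ i ∧ i ≤ l := by
    intro i hi
    have := hIsub hi
    rw [Finset.mem_Icc] at this
    exact this
  -- strict decrease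
  have hdec : ∀ i k, 1 ≤ i → 1 ≤ k → i + k ≤ l → p (i + k) < p i := by
    intro i k
    induction k with
    | zero => omega
    | succ t ih =>
      intro hi ht hil
      have hstep : p (i + t) = 2 * p (i + t + 1) + 1 := hchain (i + t) (by omega) (by omega)
      have hppos : 0 < p (i + t + 1) := (hprime _ (by omega) (by omega)).pos
      have heq : p (i + (t + 1)) = p (i + t + 1) := by rw [Nat.add_succ]
      rcases Nat.eq_zero_or_pos t with rfl | htpos
      · have h0 : p (i + 0) = p i := by rw [Nat.add_zero]
        omega
      · have ih' := ih hi htpos (by omega)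
        omega
  have hne : ∀ i j, 1 ≤ i → i ≤ l → 1 ≤ j → j ≤ l → i ≠ j → p i ≠ p j := by
    intro i j hi hil hj hjl hij
    rcases Nat.lt_or_ge i j with h | h
    · have := hdec i (j - i) hi (by omega) (by omega)
      rw [Nat.add_sub_cancel' (le_of_lt h)] at this
      omega
    · have hji : j < i := by omega
      have := hdec j (i - j) hj (by omega) (by omega)
      rw [Nat.add_sub_cancel' (le_of_lt hji)] at this
      omega
  have hcopp : ∀ i j, 1 ≤ i → i ≤ l → 1 ≤ j → j ≤ l → i ≠ j →
      Nat.Coprime (p i) (p j) := by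
    intro i j hi hil hj hjl hij
    exact (Nat.coprime_primes (hprime i hi hil) (hprime j hj hjl)).mpr
      (hne i j hi hil hj hjl hij)
  -- index disjointness facts
  have hidx : ∀ i ∈ I, ∀ j ∈ I, i ≠ j → i - 1 ≠ j - 1 ∧ i - 1 ≠ j ∧ i ≠ j - 1 := by
    intro i hi j hj hij
    obtain ⟨hi2, hil⟩ := hIm i hi
    obtain ⟨hj2, hjl⟩ := hIm j hj
    refine ⟨by omega, ?_, ?_⟩
    · intro h
      have : j + 1 = i := by omega
      exact hIcons j hj (this ▸ hi)
    · intro h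
      have : i + 1 = j := by omega
      exact hIcons i hi (this ▸ hj)
  have hpair_cop : ∀ i ∈ I, ∀ j ∈ I, i ≠ j →
      Nat.Coprime (p (i - 1) * p i) (p (j - 1) * p j) := by
    intro i hi j hj hij
    obtain ⟨hi2, hil⟩ := hIm i hi
    obtain ⟨hj2, hjl⟩ := hIm j hj
    obtain ⟨h1, h2, h3⟩ := hidx i hi j hj hij
    have c11 := hcopp (i-1) (j-1) (by omega) (by omega) (by omega) (by omega) h1
    have c12 := hcopp (i-1) j (by omega) (by omega) (by omega) (by omega) h2
    have c21 := hcopp i (j-1) (by omega) (by omega) (by omega) (by omega) h3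
    have c22 := hcopp i j (by omega) (by omega) (by omega) (by omega) hij
    exact Nat.Coprime.mul (Nat.Coprime.mul_right c11 c12) (Nat.Coprime.mul_right c21 c22)
  -- the union of the pairs
  set J : Finset ℕ := I.biUnion (fun i => {i - 1, i}) with hJ
  have hJsub : J ⊆ Finset.Icc 1 l := by
    intro t ht
    rw [hJ, Finset.mem_biUnion] at ht
    obtain ⟨i, hi, hti⟩ := ht
    obtain ⟨hi2, hil⟩ := hIm i hi
    simp only [Finset.mem_insert, Finset.mem_singleton] at hti
    rw [Finset.mem_Icc]
    omega
  have hprodJ : (∏ i ∈ I, (p (i - 1) * p i)) = ∏ t ∈ J, p t := by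
    rw [hJ, Finset.prod_biUnion]
    · refine Finset.prod_congr rfl (fun i hi => ?_)
      obtain ⟨hi2, hil⟩ := hIm i hi
      rw [Finset.prod_pair (by omega)]
    · intro i hi j hj hij
      obtain ⟨h1, h2, h3⟩ := hidx i (by exact hi) j (by exact hj) (by exact hij)
      simp only [Finset.disjoint_left, Finset.mem_insert, Finset.mem_singleton]
      rintro t (rfl | rfl) <;> rintro (h | h) <;> omega
  have hsplit : (∏ i ∈ Finset.Icc 1 l, p i)
      = (∏ t ∈ Finset.Icc 1 l \ J, p t) * ∏ t ∈ J, p t :=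
    (Finset.prod_sdiff hJsub).symm
  have hJpos : 0 < ∏ t ∈ J, p t := by
    refine Finset.prod_pos (fun t ht => ?_)
    have := hJsub ht
    rw [Finset.mem_Icc] at this
    exact (hprime t this.1 this.2).pos
  have hmval : m = ∏ t ∈ Finset.Icc 1 l \ J, p t := by
    have h := hm
    rw [hsplit, hprodJ] at h
    exact Nat.eq_of_mul_eq_mul_right hJpos h.symm
  have hmpos : 0 < m := by
    rw [hmval]
    refine Finset.prod_pos (fun t ht => ?_)
    have hmem := (Finset.mem_sdiff.mp ht).1
    rw [Finset.mem_Icc] at hmem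
    exact (hprime t hmem.1 hmem.2).pos
  refine ⟨hmpos, ?_, hpair_cop⟩
  intro i hi
  obtain ⟨hi2, hil⟩ := hIm i hi
  rw [hmval]
  refine Nat.Coprime.prod_left (fun t ht => ?_)
  have htm := Finset.mem_sdiff.mp ht
  have htIcc := htm.1
  rw [Finset.mem_Icc] at htIcc
  have htJ := htm.2
  have hti1 : t ≠ i - 1 := by
    intro h
    exact htJ (by rw [hJ, Finset.mem_biUnion]; exact ⟨i, hi, by simp [h]⟩)
  have hti : t ≠ i := by
    intro h
    exact htJ (by rw [hJ, Finset.mem_biUnion]; exact ⟨i, hi, by simp [h]⟩)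
  exact Nat.Coprime.mul_right
    (hcopp t (i-1) htIcc.1 htIcc.2 (by omega) (by omega) hti1)
    (hcopp t i htIcc.1 htIcc.2 (by omega) (by omega) hti)

end NumberTheory

section FactorIso

variable {X Y₁ Y₂ : Type*} [Finite Y₁] [Finite Y₂]
    {M M' H₁ H₂ K₁ K₂ : Type*}
    [Group M] [Group M'] [Group H₁] [Group H₂] [Group K₁] [Group K₂]
    [MulAction M X] [MulAction M' X]
    [MulAction H₁ Y₁] [MulAction H₂ Y₂] [MulAction K₁ Y₁] [MulAction K₂ Y₂]

lemma factor_iso [Nonempty Y₁] [Nonempty Y₂]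
    (eM : M ≃* H₁ × H₂) (eM' : M' ≃* K₁ × K₂)
    (q : X ≃ Y₁ × Y₂)
    (hq : ∀ (g : M) (x : X), q (g • x) = ((eM g).1 • (q x).1, (eM g).2 • (q x).2))
    (hq' : ∀ (g : M') (x : X), q (g • x) = ((eM' g).1 • (q x).1, (eM' g).2 • (q x).2))
    (htrH₁ : ∀ a b : Y₁, ∃ h : H₁, h • a = b)
    (htrK₁ : ∀ a b : Y₁, ∃ h : K₁, h • a = b)
    (htrK₂ : ∀ a b : Y₂, ∃ h : K₂, h • a = b)
    (hfaithH₂ : ∀ h : H₂, (∀ y : Y₂, h • y = y) → h = 1)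
    (hfaithK₂ : ∀ k : K₂, (∀ y : Y₂, k • y = y) → k = 1)
    (hcop : Nat.Coprime (Nat.card Y₁) (Nat.card Y₂))
    (φ : M ≃* M') (f : X ≃ X)
    (hf : ∀ (g : M) (x : X), f (g • x) = φ g • f x) :
    ∃ (ψ : H₁ ≃* K₁) (f₁ : Y₁ ≃ Y₁), ∀ (h : H₁) (y : Y₁), f₁ (h • y) = ψ h • f₁ y := by
  classical
  have hf' : ∀ (g : M') (x : X), f.symm (g • x) = φ.symm g • f.symm x := by
    intro g x
    have := hf (φ.symm g) (f.symm x)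
    rw [MulEquiv.apply_symm_apply, Equiv.apply_symm_apply] at this
    rw [← this, Equiv.symm_apply_apply]
  -- the transported equivalence relation
  set e : (Y₁ × Y₂) → (Y₁ × Y₂) → Prop :=
    fun u v => (q (f.symm (q.symm u))).2 = (q (f.symm (q.symm v))).2 with he
  have heq : Equivalence e := ⟨fun u => rfl, fun h => h.symm, fun h h' => h.trans h'⟩
  have hinv : ∀ (k₁ : K₁) (k₂ : K₂) (u v : Y₁ × Y₂), e u v →
      e (k₁ • u.1, k₂ • u.2) (k₁ • v.1, k₂ • v.2) := by
    intro k₁ k₂ u v huv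
    have key : ∀ w : Y₁ × Y₂, q (f.symm (q.symm ((k₁ • w.1, k₂ • w.2))))
        = ((eM (φ.symm (eM'.symm (k₁, k₂)))).1 • (q (f.symm (q.symm w))).1,
           (eM (φ.symm (eM'.symm (k₁, k₂)))).2 • (q (f.symm (q.symm w))).2) := by
      intro w
      have h1 : q.symm ((k₁ • w.1, k₂ • w.2)) = eM'.symm (k₁, k₂) • q.symm w := by
        apply q.injective
        rw [Equiv.apply_symm_apply, hq' (eM'.symm (k₁, k₂)) (q.symm w)]
        rw [MulEquiv.apply_symm_apply, Equiv.apply_symm_apply]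
      rw [h1, hf', hq]
    have h1 := key u
    have h2 := key v
    show (q (f.symm (q.symm _))).2 = (q (f.symm (q.symm _))).2
    rw [h1, h2]
    simp only
    rw [he] at huv
    rw [huv]
  have hsize : ∀ u, Nat.card {v // e u v} = Nat.card Y₁ := by
    intro u
    set c := (q (f.symm (q.symm u))).2 with hc
    set E : (Y₁ × Y₂) ≃ (Y₁ × Y₂) := q.symm.trans (f.symm.trans q) with hE
    have e1 : {v // e u v} ≃ {z : Y₁ × Y₂ // c = z.2} :=
      Equiv.subtypeEquiv E (fun v => Iff.rfl)
    have e2 : {z : Y₁ × Y₂ // c = z.2} ≃ Y₁ :=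
      ⟨fun z => z.val.1, fun y => ⟨(y, c), rfl⟩,
        fun z => Subtype.ext (Prod.ext rfl z.prop),
        fun y => rfl⟩
    rw [Nat.card_congr (e1.trans e2)]
  have hblock := block_relation_eq htrK₁ htrK₂ hcop e heq hinv hsize
  have hC : ∀ x x' : X, (q (f x)).2 = (q (f x')).2 ↔ (q x).2 = (q x').2 := by
    intro x x'
    have h1 := hblock (q (f x)) (q (f x'))
    rw [he] at h1
    simp only [Equiv.symm_apply_apply] at h1
    exact h1.symm
  have hC' : ∀ u u' : X, (q (f.symm u)).2 = (q (f.symm u')).2 ↔ (q u).2 = (q u').2 := by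
    intro u u'
    have := hC (f.symm u) (f.symm u')
    rw [Equiv.apply_symm_apply, Equiv.apply_symm_apply] at this
    exact this.symm
  obtain ⟨y₁0⟩ := ‹Nonempty Y₁›
  obtain ⟨b₂⟩ := ‹Nonempty Y₂›
  -- second component of φ of an embedded H₁-element is trivial
  have hK₂triv : ∀ h : H₁, (eM' (φ (eM.symm (h, 1)))).2 = 1 := by
    intro h
    apply hfaithK₂
    intro y₂
    set gg := eM.symm ((h, 1) : H₁ × H₂) with hgg
    have hstep : ∀ w : X, (q (φ gg • w)).2 = (q w).2 := by
      intro w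
      have h2 : (q (f (gg • f.symm w))).2 = (q (φ gg • w)).2 := by
        rw [hf, Equiv.apply_symm_apply]
      rw [← h2]
      have h3 : (q (gg • f.symm w)).2 = (q (f.symm w)).2 := by
        rw [hq, hgg, MulEquiv.apply_symm_apply, one_smul]
      have h4 := (hC (gg • f.symm w) (f.symm w)).mpr h3
      rw [Equiv.apply_symm_apply] at h4
      exact h4
    have h5 := hstep (q.symm (y₁0, y₂))
    rw [hq' (φ gg) (q.symm (y₁0, y₂)), Equiv.apply_symm_apply] at h5
    exact h5
  have hH₂triv : ∀ k : K₁, (eM (φ.symm (eM'.symm (k, 1)))).2 = 1 := by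
    intro k
    apply hfaithH₂
    intro y₂
    set gg := eM'.symm ((k, 1) : K₁ × K₂) with hgg
    have hstep : ∀ w : X, (q (φ.symm gg • w)).2 = (q w).2 := by
      intro w
      have h2 : (q (f.symm (gg • f w))).2 = (q (φ.symm gg • w)).2 := by
        rw [hf', Equiv.symm_apply_apply]
      rw [← h2]
      have h3 : (q (gg • f w)).2 = (q (f w)).2 := by
        rw [hq', hgg, MulEquiv.apply_symm_apply, one_smul]
      have h4 := (hC' (gg • f w) (f w)).mpr h3
      rw [Equiv.symm_apply_apply] at h4
      exact h4
    have h5 := hstep (q.symm (y₁0, y₂))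
    rw [hq (φ.symm gg) (q.symm (y₁0, y₂)), Equiv.apply_symm_apply] at h5
    exact h5
  -- the factor isomorphism
  have hre : ∀ h : H₁, eM' (φ (eM.symm (h, 1)))
      = (((eM' (φ (eM.symm (h, 1)))).1 : K₁), (1 : K₂)) := fun h =>
    Prod.ext rfl (hK₂triv h)
  have hre' : ∀ k : K₁, eM (φ.symm (eM'.symm (k, 1)))
      = (((eM (φ.symm (eM'.symm (k, 1)))).1 : H₁), (1 : H₂)) := fun k =>
    Prod.ext rfl (hH₂triv k)
  set ψ0 : H₁ → K₁ := fun h => (eM' (φ (eM.symm (h, 1)))).1 with hψ0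
  set χ0 : K₁ → H₁ := fun k => (eM (φ.symm (eM'.symm (k, 1)))).1 with hχ0
  have hψχ : ∀ h, χ0 (ψ0 h) = h := by
    intro h
    have h1 : eM'.symm ((ψ0 h, 1) : K₁ × K₂) = φ (eM.symm (h, 1)) := by
      rw [hψ0]
      simp only
      rw [← hre h, MulEquiv.symm_apply_apply]
    rw [hχ0]
    simp only
    rw [h1, MulEquiv.symm_apply_apply, MulEquiv.apply_symm_apply]
  have hχψ : ∀ k, ψ0 (χ0 k) = k := by
    intro k
    have h1 : eM.symm ((χ0 k, 1) : H₁ × H₂) = φ.symm (eM'.symm (k, 1)) := by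
      rw [hχ0]
      simp only
      rw [← hre' k, MulEquiv.symm_apply_apply]
    rw [hψ0]
    simp only
    rw [h1, MulEquiv.apply_symm_apply, MulEquiv.apply_symm_apply]
  have hψmul : ∀ h₁ h₂ : H₁, ψ0 (h₁ * h₂) = ψ0 h₁ * ψ0 h₂ := by
    intro h₁ h₂
    have h1 : ((h₁ * h₂, 1) : H₁ × H₂) = (h₁, 1) * (h₂, 1) := by
      rw [Prod.mk_mul_mk, one_mul]
    rw [hψ0]
    simp only
    rw [h1, map_mul, map_mul, map_mul, Prod.fst_mul]
  set ψ : H₁ ≃* K₁ := ⟨⟨ψ0, χ0, hψχ, hχψ⟩, fun a b => hψmul a b⟩ with hψ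
  -- the factor bijection
  set f₁0 : Y₁ → Y₁ := fun y => (q (f (q.symm (y, b₂)))).1 with hf₁0
  have hequiv : ∀ (h : H₁) (y : Y₁), f₁0 (h • y) = ψ0 h • f₁0 y := by
    intro h y
    set gg := eM.symm ((h, 1) : H₁ × H₂) with hgg
    have h1 : q.symm ((h • y, b₂) : Y₁ × Y₂) = gg • q.symm (y, b₂) := by
      apply q.injective
      rw [Equiv.apply_symm_apply, hq, hgg, MulEquiv.apply_symm_apply]
      rw [Equiv.apply_symm_apply]
      rw [one_smul]
    rw [hf₁0]
    simp only
    rw [h1, hf, hq' (φ gg) (f (q.symm (y, b₂)))]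
  have hinj : Function.Injective f₁0 := by
    intro y y' hyy
    rw [hf₁0] at hyy
    simp only at hyy
    have hx2 : (q (q.symm ((y, b₂) : Y₁ × Y₂))).2 = (q (q.symm ((y', b₂) : Y₁ × Y₂))).2 := by
      rw [Equiv.apply_symm_apply, Equiv.apply_symm_apply]
    have h2 := (hC (q.symm (y, b₂)) (q.symm (y', b₂))).mpr hx2
    have h3 : q (f (q.symm ((y, b₂) : Y₁ × Y₂))) = q (f (q.symm ((y', b₂) : Y₁ × Y₂))) :=
      Prod.ext hyy h2
    have h6 : ((y, b₂) : Y₁ × Y₂) = (y', b₂) := by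
      have h5 := f.injective (q.injective h3)
      have h7 := congrArg q h5
      rwa [Equiv.apply_symm_apply, Equiv.apply_symm_apply] at h7
    exact congrArg Prod.fst h6
  have hbij : Function.Bijective f₁0 := Finite.injective_iff_bijective.mp hinj
  exact ⟨ψ, Equiv.ofBijective f₁0 hbij, hequiv⟩

end FactorIso

section Helpers

/-- splitting a product-with-pi subgroup into factors -/
def subgroupProdPiEquiv {A : Type*} [Group A] {ι : Type*} {B : ι → Type*} [∀ i, Group (B i)]
    (M₀ : Subgroup A) (Mi : ∀ i, Subgroup (B i)) :
    ↥(M₀.prod (Subgroup.pi Set.univ Mi)) ≃* ↥M₀ × ((i : ι) → ↥(Mi i)) where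
  toFun g := (⟨g.val.1, ((Subgroup.mem_prod).mp g.prop).1⟩,
    fun i => ⟨g.val.2 i, ((Subgroup.mem_pi _).mp ((Subgroup.mem_prod).mp g.prop).2) i
      (Set.mem_univ i)⟩)
  invFun h := ⟨(h.1.val, fun i => (h.2 i).val),
    (Subgroup.mem_prod).mpr ⟨h.1.prop, (Subgroup.mem_pi _).mpr (fun i _ => (h.2 i).prop)⟩⟩
  left_inv g := rfl
  right_inv h := rfl
  map_mul' g h := rfl

/-- multiplicative version of `Equiv.piSplitAt`. -/
def mulPiSplitAt {ι : Type*} [DecidableEq ι] (i₀ : ι) (N : ι → Type*) [∀ i, Group (N i)] :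
    ((i : ι) → N i) ≃* N i₀ × ((k : {k // k ≠ i₀}) → N k.val) :=
  { Equiv.piSplitAt i₀ N with
    map_mul' := fun _ _ => rfl }

/-- `A × (B × C) ≃* B × (A × C)`. -/
def prodShuffle {A B C : Type*} [Group A] [Group B] [Group C] :
    (A × (B × C)) ≃* (B × (A × C)) where
  toFun x := (x.2.1, (x.1, x.2.2))
  invFun x := (x.2.1, (x.1, x.2.2))
  left_inv x := rfl
  right_inv x := rfl
  map_mul' x y := rfl

end Helpers

/-- Let `n = p₁ ⋯ p_l` be a Cunningham product, `I ⊆ {2, …, l}` nonempty with no two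
consecutive integers, `m = n / ∏_{i∈I} p_{i-1} pᵢ`, and
`N = C_m × ∏_{i∈I} (C_{p_{i-1}} ⋊ C_{pᵢ})`, where each `G i = C_{p_{i-1}} ⋊ C_{pᵢ}`
is the nonabelian group of order `p_{i-1} pᵢ`.  Then
`Hol(N) ≅ Hol(C_m) × ∏_{i∈I} Hol(C_{p_{i-1}} ⋊ C_{pᵢ})`; and if `M₀, M₀' ≤ Hol(C_m)`
are transitive on `C_m` and `Mᵢ, Mᵢ' ≤ Hol(G i)` are transitive on `G i` for each
`i ∈ I`, so that `M = M₀ × ∏ᵢ Mᵢ` and `M' = M₀' × ∏ᵢ Mᵢ'` are transitive subgroups of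
the product, then `M` and `M'` are isomorphic as permutation groups if and only if
`M_j` and `M_j'` are isomorphic as permutation groups for every `j ∈ {0} ∪ I`. -/
theorem prod_transitive_perm_iso_iff_factorwise
    (l : ℕ) (hl : 1 ≤ l) (p : ℕ → ℕ)
    (hprime : ∀ i, 1 ≤ i → i ≤ l → (p i).Prime)
    (hodd : ∀ i, 1 ≤ i → i ≤ l → Odd (p i))
    (hchain : ∀ i, 1 ≤ i → i < l → p i = 2 * p (i + 1) + 1)
    (n : ℕ) (hn : n = ∏ i ∈ Finset.Icc 1 l, p i)
    (I : Finset ℕ) (hIne : I.Nonempty) (hIsub : I ⊆ Finset.Icc 2 l)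
    (hIcons : ∀ i ∈ I, i + 1 ∉ I)
    (m : ℕ) (hm : n = m * ∏ i ∈ I, (p (i - 1) * p i))
    (G : ℕ → Type) [∀ i, Group (G i)]
    (hGcard : ∀ i ∈ I, Nat.card (G i) = p (i - 1) * p i)
    (hGnonab : ∀ i ∈ I, ∃ a b : G i, a * b ≠ b * a)
    (M₀ M₀' : Subgroup (Hol (Multiplicative (ZMod m))))
    (hM₀ : ∀ a b : Multiplicative (ZMod m), ∃ g ∈ M₀, holSmul g a = b)
    (hM₀' : ∀ a b : Multiplicative (ZMod m), ∃ g ∈ M₀', holSmul g a = b)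
    (Mi Mi' : (i : I) → Subgroup (Hol (G (i : ℕ))))
    (hMi : ∀ i : I, ∀ a b : G (i : ℕ), ∃ g ∈ Mi i, holSmul g a = b)
    (hMi' : ∀ i : I, ∀ a b : G (i : ℕ), ∃ g ∈ Mi' i, holSmul g a = b) :
    Nonempty
      (Hol (Multiplicative (ZMod m) × ((i : I) → G (i : ℕ))) ≃*
        Hol (Multiplicative (ZMod m)) × ((i : I) → Hol (G (i : ℕ)))) ∧
    ((∃ (φ : (M₀.prod (Subgroup.pi Set.univ fun i : I => Mi i)) ≃*
          (M₀'.prod (Subgroup.pi Set.univ fun i : I => Mi' i)))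
        (f : (Multiplicative (ZMod m) × ((i : I) → G (i : ℕ))) ≃
          (Multiplicative (ZMod m) × ((i : I) → G (i : ℕ)))),
        ∀ (g : (M₀.prod (Subgroup.pi Set.univ fun i : I => Mi i)))
          (y : Multiplicative (ZMod m) × ((i : I) → G (i : ℕ))),
          f (prodHolSmul (g : Hol (Multiplicative (ZMod m)) × ((i : I) → Hol (G (i : ℕ)))) y) =
            prodHolSmul ((φ g : (M₀'.prod (Subgroup.pi Set.univ fun i : I => Mi' i))) :
              Hol (Multiplicative (ZMod m)) × ((i : I) → Hol (G (i : ℕ)))) (f y)) ↔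
      ((∃ (φ₀ : M₀ ≃* M₀') (f₀ : Multiplicative (ZMod m) ≃ Multiplicative (ZMod m)),
          ∀ (g : M₀) (y : Multiplicative (ZMod m)),
            f₀ (holSmul (g : Hol (Multiplicative (ZMod m))) y) =
              holSmul ((φ₀ g : M₀') : Hol (Multiplicative (ZMod m))) (f₀ y)) ∧
        ∀ i : I, ∃ (φi : Mi i ≃* Mi' i) (fi : G (i : ℕ) ≃ G (i : ℕ)),
          ∀ (g : Mi i) (y : G (i : ℕ)),
            fi (holSmul (g : Hol (G (i : ℕ))) y) =
              holSmul ((φi g : Mi' i) : Hol (G (i : ℕ))) (fi y))) := by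
  classical
  -- number-theoretic facts
  obtain ⟨hmpos, hmcop, hpaircop⟩ := cunningham_facts l p hprime hchain I hIsub hIcons m
    (by rw [← hn]; exact hm)
  haveI : NeZero m := ⟨hmpos.ne'⟩
  have cardA : Nat.card (Multiplicative (ZMod m)) = m := by
    rw [Nat.card_eq_of_bijective (fun x : Multiplicative (ZMod m) => x.toAdd)
      Function.bijective_id, Nat.card_zmod]
  haveI hGfin : ∀ i : I, Finite (G (i : ℕ)) := by
    intro i
    refine Nat.finite_of_card_ne_zero ?_
    rw [hGcard i i.prop]
    have h1 := (hprime ((i : ℕ) - 1) (by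
      have := Finset.mem_Icc.mp (hIsub i.prop); omega) (by
      have := Finset.mem_Icc.mp (hIsub i.prop); omega)).pos
    have h2 := (hprime (i : ℕ) (by
      have := Finset.mem_Icc.mp (hIsub i.prop); omega) (by
      have := Finset.mem_Icc.mp (hIsub i.prop); omega)).pos
    positivity
  have cardG : ∀ i : I, Nat.card (G (i : ℕ)) = p ((i : ℕ) - 1) * p (i : ℕ) :=
    fun i => hGcard i i.prop
  have hc_mG : ∀ i : I, Nat.Coprime m (Nat.card (G (i : ℕ))) := by
    intro i
    rw [cardG i]
    exact hmcop i i.prop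
  have hc_GG : ∀ i j : I, i ≠ j → Nat.Coprime (Nat.card (G (i : ℕ))) (Nat.card (G (j : ℕ))) := by
    intro i j hij
    rw [cardG i, cardG j]
    exact hpaircop i i.prop j j.prop (fun h => hij (Subtype.ext h))
  constructor
  · -- the holomorph decomposition
    refine ⟨(holProdEquiv ?_).trans (MulEquiv.prodCongr (MulEquiv.refl _) (holPiEquiv ?_))⟩
    · rw [cardA, Nat.card_pi]
      exact Nat.Coprime.prod_right (fun i _ => hc_mG i)
    · exact fun i j hij => hc_GG i j hij
  constructor
  · -- forward direction
    rintro ⟨Φ, f, hf⟩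
    -- action of the big subgroups on the big space
    letI actM : MulAction (↥(M₀.prod (Subgroup.pi Set.univ fun i : I => Mi i)))
        (Multiplicative (ZMod m) × ((i : I) → G (i : ℕ))) :=
      { smul := fun g x => prodHolSmul g.val x
        one_smul := fun x => Prod.ext (holSmul_one x.1) (funext fun i => holSmul_one (x.2 i))
        mul_smul := fun g h x => Prod.ext (holSmul_mul _ _ x.1)
          (funext fun i => holSmul_mul _ _ (x.2 i)) }
    letI actM' : MulAction (↥(M₀'.prod (Subgroup.pi Set.univ fun i : I => Mi' i)))
        (Multiplicative (ZMod m) × ((i : I) → G (i : ℕ))) :=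
      { smul := fun g x => prodHolSmul g.val x
        one_smul := fun x => Prod.ext (holSmul_one x.1) (funext fun i => holSmul_one (x.2 i))
        mul_smul := fun g h x => Prod.ext (holSmul_mul _ _ x.1)
          (funext fun i => holSmul_mul _ _ (x.2 i)) }
    letI act0 : MulAction ↥M₀ (Multiplicative (ZMod m)) :=
      { smul := fun g x => holSmul g.val x
        one_smul := fun x => holSmul_one x
        mul_smul := fun g h x => holSmul_mul _ _ x }
    letI act0' : MulAction ↥M₀' (Multiplicative (ZMod m)) :=
      { smul := fun g x => holSmul g.val x
        one_smul := fun x => holSmul_one x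
        mul_smul := fun g h x => holSmul_mul _ _ x }
    have hfs : ∀ (g : ↥(M₀.prod (Subgroup.pi Set.univ fun i : I => Mi i)))
        (x : Multiplicative (ZMod m) × ((i : I) → G (i : ℕ))),
        f (g • x) = Φ g • f x := fun g x => hf g x
    refine ⟨?_, fun i₀ => ?_⟩
    · -- factor 0
      letI actPi : MulAction ((i : I) → ↥(Mi i)) ((i : I) → G (i : ℕ)) :=
        { smul := fun h y => fun i => holSmul (h i).val (y i)
          one_smul := fun y => funext fun i => holSmul_one (y i)
          mul_smul := fun g h y => funext fun i => holSmul_mul _ _ (y i) }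
      letI actPi' : MulAction ((i : I) → ↥(Mi' i)) ((i : I) → G (i : ℕ)) :=
        { smul := fun h y => fun i => holSmul (h i).val (y i)
          one_smul := fun y => funext fun i => holSmul_one (y i)
          mul_smul := fun g h y => funext fun i => holSmul_mul _ _ (y i) }
      refine factor_iso (Y₁ := Multiplicative (ZMod m)) (Y₂ := (i : I) → G (i : ℕ))
        (subgroupProdPiEquiv M₀ Mi) (subgroupProdPiEquiv M₀' Mi')
        (Equiv.refl _) (fun g x => rfl) (fun g x => rfl)
        ?_ ?_ ?_ ?_ ?_ ?_ Φ f hfs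
      · intro a b
        obtain ⟨g, hg, hv⟩ := hM₀ a b
        exact ⟨⟨g, hg⟩, hv⟩
      · intro a b
        obtain ⟨g, hg, hv⟩ := hM₀' a b
        exact ⟨⟨g, hg⟩, hv⟩
      · intro a b
        choose gf hmem hval using fun i : I => hMi' i (a i) (b i)
        exact ⟨fun i => ⟨gf i, hmem i⟩, funext hval⟩
      · intro h hyp
        funext i
        refine Subtype.ext (holSmul_faithful _ (fun a => ?_))
        have h1 := congrFun (hyp (Function.update (fun k : I => (1 : G (k : ℕ))) i a)) i
        have h2 : holSmul (h i).val (Function.update (fun k : I => (1 : G (k : ℕ))) i a i)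
            = Function.update (fun k : I => (1 : G (k : ℕ))) i a i := h1
        rwa [Function.update_self] at h2
      · intro h hyp
        funext i
        refine Subtype.ext (holSmul_faithful _ (fun a => ?_))
        have h1 := congrFun (hyp (Function.update (fun k : I => (1 : G (k : ℕ))) i a)) i
        have h2 : holSmul (h i).val (Function.update (fun k : I => (1 : G (k : ℕ))) i a i)
            = Function.update (fun k : I => (1 : G (k : ℕ))) i a i := h1
        rwa [Function.update_self] at h2
      · rw [cardA, Nat.card_pi]
        exact Nat.Coprime.prod_right (fun i _ => hc_mG i)
    · -- factor i₀
      letI actH1 : MulAction ↥(Mi i₀) (G (i₀ : ℕ)) :=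
        { smul := fun g x => holSmul g.val x
          one_smul := fun x => holSmul_one x
          mul_smul := fun g h x => holSmul_mul _ _ x }
      letI actK1 : MulAction ↥(Mi' i₀) (G (i₀ : ℕ)) :=
        { smul := fun g x => holSmul g.val x
          one_smul := fun x => holSmul_one x
          mul_smul := fun g h x => holSmul_mul _ _ x }
      letI actH2 : MulAction (↥M₀ × ((k : {k : I // k ≠ i₀}) → ↥(Mi k.val)))
          (Multiplicative (ZMod m) × ((k : {k : I // k ≠ i₀}) → G ((k.val : I) : ℕ))) :=
        { smul := fun h y => (holSmul h.1.val y.1, fun k => holSmul (h.2 k).val (y.2 k))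
          one_smul := fun y => Prod.ext (holSmul_one y.1) (funext fun k => holSmul_one (y.2 k))
          mul_smul := fun g h y => Prod.ext (holSmul_mul _ _ y.1)
            (funext fun k => holSmul_mul _ _ (y.2 k)) }
      letI actK2 : MulAction (↥M₀' × ((k : {k : I // k ≠ i₀}) → ↥(Mi' k.val)))
          (Multiplicative (ZMod m) × ((k : {k : I // k ≠ i₀}) → G ((k.val : I) : ℕ))) :=
        { smul := fun h y => (holSmul h.1.val y.1, fun k => holSmul (h.2 k).val (y.2 k))
          one_smul := fun y => Prod.ext (holSmul_one y.1) (funext fun k => holSmul_one (y.2 k))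
          mul_smul := fun g h y => Prod.ext (holSmul_mul _ _ y.1)
            (funext fun k => holSmul_mul _ _ (y.2 k)) }
      set q : (Multiplicative (ZMod m) × ((i : I) → G (i : ℕ))) ≃
          ((G ((i₀ : I) : ℕ)) × (Multiplicative (ZMod m) ×
            ((k : {k : I // k ≠ i₀}) → G ((k.val : I) : ℕ)))) :=
        (Equiv.prodCongr (Equiv.refl _) (Equiv.piSplitAt i₀ (fun i : I => G (i : ℕ)))).trans
          ((Equiv.prodAssoc _ _ _).symm.trans
            ((Equiv.prodCongr (Equiv.prodComm _ _) (Equiv.refl _)).trans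
              (Equiv.prodAssoc _ _ _))) with hqdef
      set eMsplit := (subgroupProdPiEquiv M₀ Mi).trans
        ((MulEquiv.prodCongr (MulEquiv.refl ↥M₀)
          (mulPiSplitAt i₀ (fun i : I => ↥(Mi i)))).trans prodShuffle) with heM
      set eMsplit' := (subgroupProdPiEquiv M₀' Mi').trans
        ((MulEquiv.prodCongr (MulEquiv.refl ↥M₀')
          (mulPiSplitAt i₀ (fun i : I => ↥(Mi' i)))).trans prodShuffle) with heM'
      refine factor_iso eMsplit eMsplit' q (fun g x => rfl) (fun g x => rfl)
        ?_ ?_ ?_ ?_ ?_ ?_ Φ f hfs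
      · intro a b
        obtain ⟨g, hg, hv⟩ := hMi i₀ a b
        exact ⟨⟨g, hg⟩, hv⟩
      · intro a b
        obtain ⟨g, hg, hv⟩ := hMi' i₀ a b
        exact ⟨⟨g, hg⟩, hv⟩
      · intro a b
        obtain ⟨g0, hg0, hv0⟩ := hM₀' a.1 b.1
        choose gf hmem hval using fun k : {k : I // k ≠ i₀} => hMi' k.val (a.2 k) (b.2 k)
        exact ⟨(⟨g0, hg0⟩, fun k => ⟨gf k, hmem k⟩), Prod.ext hv0 (funext hval)⟩
      · intro h hyp
        have h1 : h.1 = 1 := Subtype.ext (holSmul_faithful _ (fun a =>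
          congrArg Prod.fst (hyp (a, fun k => 1))))
        have h2 : h.2 = 1 := by
          funext k
          refine Subtype.ext (holSmul_faithful _ (fun a => ?_))
          have h3 := congrFun (congrArg Prod.snd (hyp
            ((1 : Multiplicative (ZMod m)),
              Function.update (fun k' : {k : I // k ≠ i₀} => (1 : G ((k'.val : I) : ℕ))) k a))) k
          have h4 : holSmul (h.2 k).val
              (Function.update (fun k' : {k : I // k ≠ i₀} =>
                (1 : G ((k'.val : I) : ℕ))) k a k)
              = Function.update (fun k' : {k : I // k ≠ i₀} =>
                (1 : G ((k'.val : I) : ℕ))) k a k := h3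
          rwa [Function.update_self] at h4
        exact Prod.ext h1 h2
      · intro h hyp
        have h1 : h.1 = 1 := Subtype.ext (holSmul_faithful _ (fun a =>
          congrArg Prod.fst (hyp (a, fun k => 1))))
        have h2 : h.2 = 1 := by
          funext k
          refine Subtype.ext (holSmul_faithful _ (fun a => ?_))
          have h3 := congrFun (congrArg Prod.snd (hyp
            ((1 : Multiplicative (ZMod m)),
              Function.update (fun k' : {k : I // k ≠ i₀} => (1 : G ((k'.val : I) : ℕ))) k a))) k
          have h4 : holSmul (h.2 k).val
              (Function.update (fun k' : {k : I // k ≠ i₀} =>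
                (1 : G ((k'.val : I) : ℕ))) k a k)
              = Function.update (fun k' : {k : I // k ≠ i₀} =>
                (1 : G ((k'.val : I) : ℕ))) k a k := h3
          rwa [Function.update_self] at h4
        exact Prod.ext h1 h2
      · rw [Nat.card_prod, cardA, Nat.card_pi]
        exact Nat.Coprime.mul_right (hc_mG i₀).symm
          (Nat.Coprime.prod_right (fun k _ => hc_GG i₀ k.val (fun hh => k.prop hh.symm)))
  · -- backward direction
    rintro ⟨⟨φ₀, f₀, h₀⟩, hI⟩
    choose φI fI hIe using hI
    refine ⟨(subgroupProdPiEquiv M₀ Mi).trans ((MulEquiv.prodCongr φ₀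
      (MulEquiv.piCongrRight φI)).trans (subgroupProdPiEquiv M₀' Mi').symm),
      Equiv.prodCongr f₀ (Equiv.piCongrRight fI), ?_⟩
    intro g y
    refine Prod.ext ?_ (funext fun i => ?_)
    · exact h₀ ⟨g.val.1, ((Subgroup.mem_prod).mp g.prop).1⟩ y.1
    · exact hIe i ⟨g.val.2 i, ((Subgroup.mem_pi _).mp
        ((Subgroup.mem_prod).mp g.prop).2) i (Set.mem_univ i)⟩ (y.2 i)
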